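/- Let K be a field, n a finite linearly ordered index type, and consider the Lie algebra gl_n(K) of n×n matrices over K with the commutator bracket [M,N] = MN − NM. Let π₋ be the projection onto the strictly lower triangular part, (π₋ M)_{ij} = M_{ij} if i > j and 0 otherwise, and define M ▷ N := −[π₋ M, N]. Then (gl_n(K), [·,·], ▷) is a post-Lie algebra: ▷ is bilinear and satisfies, for all matrices M, N, P, (PL1) M ▷ [N,P] = [M ▷ N, P] + [N, M ▷ P] and (PL2) [M,N] ▷ P = a(M,N,P) − a(N,M,P), where a(M,N,P) := M ▷ (N ▷ P) − (M ▷ N) ▷ P. -/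

import Mathlib

/-- **Theorem (the post-Lie algebra of the LU factorization).**
Let `K` be a field, `n` a finite linearly ordered index type, and consider the Lie algebra
`gl_n(K)` of `n × n` matrices over `K` with the commutator bracket `[M,N] = MN − NM`. Let
`π₋` be the projection onto the strictly lower triangular part, and define
`M ▷ N := −[π₋ M, N]` (denoted `d` below). Then `(gl_n(K), [·,·], ▷)` is a post-Lie algebra:
`▷` is bilinear and satisfies (PL1) `M ▷ [N,P] = [M ▷ N, P] + [N, M ▷ P]` and
(PL2) `[M,N] ▷ P = a(M,N,P) − a(N,M,P)`, where `a(M,N,P) := M ▷ (N ▷ P) − (M ▷ N) ▷ P`. -/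
theorem lu_postLie {K : Type*} [Field K] {n : Type*} [Fintype n] [DecidableEq n] [LinearOrder n]
    (π : Matrix n n K → Matrix n n K)
    (hπ : ∀ (M : Matrix n n K) (i j : n), π M i j = if j < i then M i j else 0)
    (d : Matrix n n K → Matrix n n K → Matrix n n K)
    (hd : ∀ M N : Matrix n n K, d M N = -⁅π M, N⁆) :
    -- `▷` is bilinear
    (∀ M M' N : Matrix n n K, d (M + M') N = d M N + d M' N) ∧
    (∀ (c : K) (M N : Matrix n n K), d (c • M) N = c • d M N) ∧
    (∀ M N N' : Matrix n n K, d M (N + N') = d M N + d M N') ∧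
    (∀ (c : K) (M N : Matrix n n K), d M (c • N) = c • d M N) ∧
    -- (PL1)
    (∀ M N P : Matrix n n K, d M ⁅N, P⁆ = ⁅d M N, P⁆ + ⁅N, d M P⁆) ∧
    -- (PL2)
    (∀ M N P : Matrix n n K, d ⁅M, N⁆ P =
      (d M (d N P) - d (d M N) P) - (d N (d M P) - d (d N M) P)) := by
  -- linearity of π
  have πadd : ∀ A B : Matrix n n K, π (A + B) = π A + π B := by
    intro A B; ext i j
    rw [Matrix.add_apply, hπ, hπ, hπ, Matrix.add_apply]
    split_ifs <;> simp
  have πsmul : ∀ (c : K) (A : Matrix n n K), π (c • A) = c • π A := by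
    intro c A; ext i j
    rw [Matrix.smul_apply, hπ, hπ, Matrix.smul_apply]
    split_ifs <;> simp
  have πneg : ∀ A : Matrix n n K, π (-A) = -π A := by
    intro A; ext i j
    rw [Matrix.neg_apply, hπ, hπ, Matrix.neg_apply]
    split_ifs <;> simp
  have πsub : ∀ A B : Matrix n n K, π (A - B) = π A - π B := by
    intro A B
    rw [sub_eq_add_neg, πadd, πneg, sub_eq_add_neg]
  -- products of strictly lower triangular matrices are strictly lower
  have hlow : ∀ A B : Matrix n n K, ∀ i j, ¬ j < i → (π A * π B) i j = 0 := by
    intro A B i j h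
    rw [Matrix.mul_apply]
    apply Finset.sum_eq_zero
    intro k _
    rw [hπ, hπ]
    by_cases h1 : k < i
    · by_cases h2 : j < k
      · exact absurd (h2.trans h1) h
      · simp [h2]
    · simp [h1]
  -- products of upper triangular matrices are upper triangular
  have hup : ∀ A B : Matrix n n K, ∀ i j, j < i → ((A - π A) * (B - π B)) i j = 0 := by
    intro A B i j h
    rw [Matrix.mul_apply]
    apply Finset.sum_eq_zero
    intro k _
    rw [Matrix.sub_apply, Matrix.sub_apply, hπ, hπ]
    by_cases h1 : k < i
    · simp [h1]
    · have h2 : j < k := lt_of_lt_of_le h (not_lt.1 h1)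
      simp [h1, h2]
  -- π fixes brackets of strictly lower matrices
  have πlow : ∀ A B : Matrix n n K, π ⁅π A, π B⁆ = ⁅π A, π B⁆ := by
    intro A B; ext i j
    rw [hπ]
    split_ifs with h
    · rfl
    · rw [Ring.lie_def, Matrix.sub_apply, hlow A B i j h, hlow B A i j h, sub_zero]
  -- π kills brackets of upper matrices
  have πup : ∀ A B : Matrix n n K, π ⁅A - π A, B - π B⁆ = 0 := by
    intro A B; ext i j
    rw [hπ, Matrix.zero_apply]
    split_ifs with h
    · rw [Ring.lie_def, Matrix.sub_apply, hup A B i j h, hup B A i j h, sub_zero]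
    · rfl
  -- the Rota–Baxter type identity
  have key : ∀ A B : Matrix n n K,
      π ⁅A, B⁆ = π ⁅π A, B⁆ + π ⁅A, π B⁆ - ⁅π A, π B⁆ := by
    intro A B
    have e : ⁅A - π A, B - π B⁆ = ⁅A, B⁆ - ⁅π A, B⁆ - ⁅A, π B⁆ + ⁅π A, π B⁆ := by
      simp only [Ring.lie_def]; noncomm_ring
    have h0 := πup A B
    rw [e, πadd, πsub, πsub, πlow] at h0
    rw [← sub_eq_zero, ← h0]
    abel
  refine ⟨?_, ?_, ?_, ?_, ?_, ?_⟩
  · intro M M' N; rw [hd, hd, hd, πadd]; simp only [Ring.lie_def]; noncomm_ring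
  · intro c M N; rw [hd, hd, πsmul]; simp [Ring.lie_def, Matrix.mul_smul, Matrix.smul_mul, smul_sub, smul_neg]
  · intro M N N'; rw [hd, hd, hd]; simp only [Ring.lie_def]; noncomm_ring
  · intro c M N
    rw [hd, hd]
    simp [Ring.lie_def, Matrix.mul_smul, Matrix.smul_mul, smul_sub, smul_neg]
  · intro M N P
    rw [hd, hd, hd]
    simp only [Ring.lie_def]
    noncomm_ring
  · intro M N P
    rw [hd, hd, hd, hd, hd, hd, hd, hd, hd, πneg, πneg,
      key M N]
    have hswap : π ⁅π N, M⁆ = - π ⁅M, π N⁆ := by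
      rw [← πneg]; congr 1; simp only [Ring.lie_def]; noncomm_ring
    rw [hswap]
    simp only [Ring.lie_def]
    noncomm_ring
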